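/- (Theorem 1.1.A) Let ψ, ζ, ν ∈ EΨ(a,b) with ζ = ψ·ν. For every positive vector s = (s(1),…,s(k)), the dilation operator σ_s is bounded from G(ψ) into G(ζ), and its operator norm satisfies ‖σ_s‖(G(ψ) → G(ζ)) ≤ φ(G(ν), s^{d+θ}), where s^{d+θ} = ∏_{r=1}^k s(r)^{d(r)+θ(r)}. -/

import Mathlib

noncomputable section

open MeasureTheory Filter Set Topology
open scoped ENNReal NNReal

/-- The set of exponents `p` with `a < p < b` (where `b : ℝ≥0∞` may be `∞`). -/
def expSet (a : ℝ) (b : ℝ≥0∞) : Set ℝ := {p : ℝ | a < p ∧ ENNReal.ofReal p < b}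

/-- The filter of real exponents `p` tending to `b` from below (`p → b⁻`);
when `b = ∞` this amounts to `p → ∞`. -/
def atBbelow (b : ℝ≥0∞) : Filter ℝ :=
  Filter.comap ENNReal.ofReal (nhdsWithin b (Set.Iio b))

/-- The class `EΨ(a,b)`: continuous `ψ` on `(a,b)` with `ψ(p) ≥ 1` and `ψ(b-0) = ∞`. -/
def IsEPsi (a : ℝ) (b : ℝ≥0∞) (ψ : ℝ → ℝ) : Prop :=
  ContinuousOn ψ (expSet a b) ∧ (∀ p ∈ expSet a b, 1 ≤ ψ p) ∧
    Filter.Tendsto ψ (atBbelow b) Filter.atTop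

/-- Norm of the Bilateral Grand Lebesgue space `G(ψ; a, b)` over a measure `μ`:
`‖f‖_{G(ψ)} = sup_{p ∈ (a,b)} ‖f‖_{L^p(μ)} / ψ(p)`, with values in `ℝ≥0∞`. -/
def GNorm {α : Type*} [MeasurableSpace α] (μ : Measure α) (a : ℝ) (b : ℝ≥0∞)
    (ψ : ℝ → ℝ) (f : α → ℝ) : ℝ≥0∞ :=
  ⨆ p ∈ expSet a b, eLpNorm f (ENNReal.ofReal p) μ / ENNReal.ofReal (ψ p)

/-- The class `Ψ(a,b)` (relative to a measure `μ`): positive continuous `ψ` on `(a,b)`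
with `ψ(b-0) = ∞`, admitting a representation `ψ(p) = ‖f‖_{L^p(μ)}` for `p ∈ (a,b)`, where
the measurable `f` lies in `L^p(μ)` for all `p ∈ (a,b)`. -/
def IsPsi {α : Type*} [MeasurableSpace α] (μ : Measure α) (a : ℝ) (b : ℝ≥0∞)
    (ψ : ℝ → ℝ) : Prop :=
  ContinuousOn ψ (expSet a b) ∧ (∀ p ∈ expSet a b, 0 < ψ p) ∧
    Filter.Tendsto ψ (atBbelow b) Filter.atTop ∧
    ∃ f : α → ℝ, AEStronglyMeasurable f μ ∧
      ∀ p ∈ expSet a b, eLpNorm f (ENNReal.ofReal p) μ = ENNReal.ofReal (ψ p)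

/-- The fundamental function `φ(G(ψ;a,b), s) = sup_{p ∈ (a,b)} s^{1/p}/ψ(p)`, real-valued. -/
def fundR (a : ℝ) (b : ℝ≥0∞) (ψ : ℝ → ℝ) (s : ℝ) : ℝ :=
  ⨆ p : expSet a b, s ^ (1 / (p : ℝ)) / ψ p

/-- The fundamental function `φ(G(ψ;a,b), δ) = sup_{p ∈ (a,b)} δ^{1/p}/ψ(p)`, `ℝ≥0∞`-valued. -/
def fundE (a : ℝ) (b : ℝ≥0∞) (ψ : ℝ → ℝ) (δ : ℝ≥0∞) : ℝ≥0∞ :=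
  ⨆ p ∈ expSet a b, δ ^ (1 / p) / ENNReal.ofReal (ψ p)

/-- The space `X = ℝ₊^{d(1)} × ⋯ × ℝ₊^{d(k)}`, modelled as the dependent product
`∀ r : Fin k, (Fin (d r) → ℝ)`; the restriction to the positive orthant is encoded
in the measure `wMeasure` below. -/
abbrev PiX (k : ℕ) (d : Fin k → ℕ) : Type := ∀ r : Fin k, Fin (d r) → ℝ

/-- The positive orthant of `X`. -/
def orthant (k : ℕ) (d : Fin k → ℕ) : Set (PiX k d) := {x | ∀ r i, 0 < x r i}

/-- The weighted measure `μ(V) = ∫_V W(x) dx` on `X = ℝ₊^{d(1)} × ⋯ × ℝ₊^{d(k)}`. -/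
def wMeasure (k : ℕ) (d : Fin k → ℕ) (W : PiX k d → ℝ) : Measure (PiX k d) :=
  (volume.restrict (orthant k d)).withDensity fun x => ENNReal.ofReal (W x)

/-- The dilation operator `(σ_s f)(x) = f(x(d(1))/s(1), …, x(d(k))/s(k))`. -/
def dilate {k : ℕ} {d : Fin k → ℕ} (s : Fin k → ℝ) (f : PiX k d → ℝ) : PiX k d → ℝ :=
  fun x => f fun r i => x r i / s r

/-- `s^e = ∏_{r=1}^k s(r)^{e(r)}`. -/
def sPow {k : ℕ} (s e : Fin k → ℝ) : ℝ := ∏ r, s r ^ e r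

/-- The operator norm `‖σ_s‖(G(ψ) → G(ζ))` of the dilation operator. -/
def dilOpNorm {k : ℕ} {d : Fin k → ℕ} (μ : Measure (PiX k d)) (a : ℝ) (b : ℝ≥0∞)
    (ψ ζ : ℝ → ℝ) (s : Fin k → ℝ) : ℝ≥0∞ :=
  ⨆ f : {f : PiX k d → ℝ // AEStronglyMeasurable f μ},
    GNorm μ a b ζ (dilate s f.1) / GNorm μ a b ψ f.1


section DilationAux

variable {k : ℕ} {d : Fin k → ℕ}

lemma measure_pi_nnsmul {ι : Type*} [Fintype ι] {α : ι → Type*} [∀ i, MeasurableSpace (α i)]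
    (μ : ∀ i, Measure (α i)) [∀ i, SigmaFinite (μ i)] (c : ι → ℝ≥0) :
    Measure.pi (fun i => c i • μ i) = (∏ i, c i) • Measure.pi μ := by
  refine Measure.pi_eq fun t ht => ?_
  simp only [Measure.smul_apply, Measure.pi_pi, ENNReal.smul_def, smul_eq_mul,
    ENNReal.coe_finset_prod, Finset.prod_mul_distrib]

lemma measurePreserving_scaleT (s : Fin k → ℝ) (hs : ∀ r, 0 < s r) :
    MeasurePreserving (fun x : PiX k d => fun r i => s r * x r i) volume
      ((∏ r, ((s r)⁻¹ ^ d r).toNNReal) • volume) := by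
  have hinv : ∀ r : Fin k, 0 < (s r)⁻¹ := fun r => inv_pos.mpr (hs r)
  have h1 : ∀ r : Fin k, MeasurePreserving (fun y : Fin (d r) → ℝ => fun i => s r * y i)
      volume (((s r)⁻¹ ^ d r).toNNReal • volume) := by
    intro r
    have hbase : MeasurePreserving (fun x : ℝ => s r * x) volume
        (((s r)⁻¹).toNNReal • volume) := by
      refine ⟨measurable_const_mul _, ?_⟩
      rw [Real.map_volume_mul_left (ne_of_gt (hs r)), abs_of_pos (hinv r)]
      rfl
    have h := MeasureTheory.measurePreserving_pi (fun _ : Fin (d r) => (volume : Measure ℝ))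
      (fun _ => ((s r)⁻¹).toNNReal • volume) (fun _ => hbase)
    rw [measure_pi_nnsmul] at h
    have heq : (∏ _i : Fin (d r), ((s r)⁻¹).toNNReal) = ((s r)⁻¹ ^ d r).toNNReal := by
      rw [Real.toNNReal_pow (hinv r).le, Finset.prod_const]
      simp
    rw [heq] at h
    simpa [MeasureTheory.volume_pi] using h
  have h2 := MeasureTheory.measurePreserving_pi
      (fun r : Fin k => (volume : Measure (Fin (d r) → ℝ)))
      (fun r => ((s r)⁻¹ ^ d r).toNNReal • volume) h1
  rw [measure_pi_nnsmul] at h2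
  simpa [MeasureTheory.volume_pi] using h2

lemma measurableSet_orthant : MeasurableSet (orthant k d) := by
  have : orthant k d = ⋂ r, ⋂ i, {x : PiX k d | 0 < x r i} := by
    ext x; simp [orthant]
  rw [this]
  exact MeasurableSet.iInter fun r => MeasurableSet.iInter fun i =>
    measurableSet_lt measurable_const ((measurable_pi_apply i).comp (measurable_pi_apply r))

lemma measurable_Wprod {W : ∀ r : Fin k, (Fin (d r) → ℝ) → ℝ}
    (hWcont : ∀ r, ContinuousOn (W r) {y | y ≠ 0}) :
    Measurable fun x : PiX k d => ∏ r, W r (x r) := by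
  have hWm : ∀ r, Measurable (W r) := by
    intro r
    apply measurable_of_continuousOn_compl_singleton 0
    exact hWcont r
  exact Finset.measurable_prod _ fun r _ => (hWm r).comp (measurable_pi_apply r)

lemma lintegral_dilate (θ : Fin k → ℝ) (W : ∀ r : Fin k, (Fin (d r) → ℝ) → ℝ)
    (hWnn : ∀ r y, 0 ≤ W r y)
    (hWcont : ∀ r, ContinuousOn (W r) {y | y ≠ 0})
    (hWhom : ∀ (r : Fin k) (lam : ℝ), 0 < lam → ∀ y, W r (lam • y) = lam ^ θ r * W r y)
    (s : Fin k → ℝ) (hs : ∀ r, 0 < s r)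
    (g : PiX k d → ℝ≥0∞) (hg : Measurable g) :
    ∫⁻ x, g (fun r i => x r i / s r) ∂(wMeasure k d fun x => ∏ r, W r (x r)) =
      ENNReal.ofReal (∏ r, s r ^ ((d r : ℝ) + θ r)) *
        ∫⁻ x, g x ∂(wMeasure k d fun x => ∏ r, W r (x r)) := by
  classical
  set w : PiX k d → ℝ≥0∞ := fun x => ENNReal.ofReal (∏ r, W r (x r)) with hw
  have hwmeas : Measurable w := (measurable_Wprod hWcont).ennreal_ofReal
  have hO : MeasurableSet (orthant k d) := measurableSet_orthant
  have hinvmeas : Measurable fun x : PiX k d => (fun r i => x r i / s r : PiX k d) := by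
    apply measurable_pi_lambda
    intro r
    apply measurable_pi_lambda
    intro i
    exact ((measurable_pi_apply i).comp (measurable_pi_apply r)).div_const _
  have hcomp : Measurable fun x : PiX k d => g (fun r i => x r i / s r) :=
    hg.comp hinvmeas
  set T : PiX k d → PiX k d := fun x r i => s r * x r i with hTdef
  have hT := measurePreserving_scaleT (d := d) s hs
  set C : ℝ≥0 := ∏ r, ((s r)⁻¹ ^ d r).toNNReal with hC
  -- rewriting the weighted integral as an indicator integral over `volume`
  have hdil1 : ∫⁻ x, g (fun r i => x r i / s r) ∂(wMeasure k d fun x => ∏ r, W r (x r)) =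
      ∫⁻ x, (orthant k d).indicator (fun x => w x * g (fun r i => x r i / s r)) x := by
    rw [wMeasure, lintegral_withDensity_eq_lintegral_mul _ hwmeas hcomp,
      ← lintegral_indicator hO]
    rfl
  have hdil2 : ∫⁻ x, g x ∂(wMeasure k d fun x => ∏ r, W r (x r)) =
      ∫⁻ x, (orthant k d).indicator (fun x => w x * g x) x := by
    rw [wMeasure, lintegral_withDensity_eq_lintegral_mul _ hwmeas hg,
      ← lintegral_indicator hO]
    rfl
  -- change of variables for `volume`
  have key : ∀ F : PiX k d → ℝ≥0∞, Measurable F →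
      ∫⁻ y, F (T y) = (C : ℝ≥0∞) * ∫⁻ x, F x := by
    intro F hF
    rw [hT.lintegral_comp hF]
    show ∫⁻ b, F b ∂((C : ℝ≥0∞) • volume) = _
    rw [lintegral_smul_measure, smul_eq_mul]
  have hΘpos : 0 < ∏ r, s r ^ θ r :=
    Finset.prod_pos fun r _ => Real.rpow_pos_of_pos (hs r) _
  have hmem : ∀ y, T y ∈ orthant k d ↔ y ∈ orthant k d := by
    intro y
    constructor
    · intro h r i
      have h' := h r i
      have : 0 < s r * y r i := h'
      nlinarith [hs r, mul_pos (hs r) (h r i)]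
    · intro h r i
      exact mul_pos (hs r) (h r i)
  have hpoint : ∀ y, ((orthant k d).indicator
        (fun x => w x * g (fun r i => x r i / s r))) (T y)
      = ENNReal.ofReal (∏ r, s r ^ θ r) *
          (orthant k d).indicator (fun x => w x * g x) y := by
    intro y
    by_cases hy : y ∈ orthant k d
    · rw [Set.indicator_of_mem ((hmem y).mpr hy), Set.indicator_of_mem hy]
      have hwT : w (T y) = ENNReal.ofReal (∏ r, s r ^ θ r) * w y := by
        simp only [hw]
        rw [← ENNReal.ofReal_mul hΘpos.le]
        congr 1
        rw [← Finset.prod_mul_distrib]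
        refine Finset.prod_congr rfl fun r _ => ?_
        exact hWhom r (s r) (hs r) (y r)
      have hgT : g (fun r i => T y r i / s r) = g y := by
        congr 1
        funext r i
        exact mul_div_cancel_left₀ _ (ne_of_gt (hs r))
      calc w (T y) * g (fun r i => T y r i / s r)
          = (ENNReal.ofReal (∏ r, s r ^ θ r) * w y) * g y := by rw [hwT, hgT]
        _ = ENNReal.ofReal (∏ r, s r ^ θ r) * (w y * g y) := by ring
    · rw [Set.indicator_of_notMem (fun h => hy ((hmem y).mp h)),
        Set.indicator_of_notMem hy, mul_zero]
  set F : PiX k d → ℝ≥0∞ :=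
    (orthant k d).indicator (fun x => w x * g (fun r i => x r i / s r)) with hF
  set G : PiX k d → ℝ≥0∞ := (orthant k d).indicator (fun x => w x * g x) with hG
  have hFmeas : Measurable F := (hwmeas.mul hcomp).indicator hO
  have hmain : (C : ℝ≥0∞) * ∫⁻ x, F x
      = ENNReal.ofReal (∏ r, s r ^ θ r) * ∫⁻ x, G x := by
    rw [← key F hFmeas]
    calc ∫⁻ y, F (T y)
        = ∫⁻ y, ENNReal.ofReal (∏ r, s r ^ θ r) * G y := by
          exact lintegral_congr fun y => hpoint y
      _ = ENNReal.ofReal (∏ r, s r ^ θ r) * ∫⁻ y, G y :=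
          lintegral_const_mul' _ _ ENNReal.ofReal_ne_top
  have hCinv : (C : ℝ≥0∞) * ENNReal.ofReal (∏ r, s r ^ d r) = 1 := by
    have h1 : (C : ℝ≥0∞) = ENNReal.ofReal (∏ r, (s r)⁻¹ ^ d r) := by
      rw [ENNReal.ofReal_prod_of_nonneg (fun r _ => pow_nonneg (inv_pos.mpr (hs r)).le _),
        hC, ENNReal.coe_finset_prod]
      rfl
    rw [h1, ← ENNReal.ofReal_mul (Finset.prod_nonneg fun r _ =>
      pow_nonneg (inv_pos.mpr (hs r)).le _), ← Finset.prod_mul_distrib]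
    have : ∀ r : Fin k, (s r)⁻¹ ^ d r * s r ^ d r = 1 := by
      intro r
      rw [inv_pow]
      exact inv_mul_cancel₀ (pow_ne_zero _ (ne_of_gt (hs r)))
    rw [Finset.prod_congr rfl fun r _ => this r, Finset.prod_const_one, ENNReal.ofReal_one]
  have hsplit : ENNReal.ofReal (∏ r, s r ^ ((d r : ℝ) + θ r))
      = ENNReal.ofReal (∏ r, s r ^ d r) * ENNReal.ofReal (∏ r, s r ^ θ r) := by
    rw [← ENNReal.ofReal_mul (Finset.prod_nonneg fun r _ => pow_nonneg (hs r).le _),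
      ← Finset.prod_mul_distrib]
    congr 1
    refine Finset.prod_congr rfl fun r _ => ?_
    rw [Real.rpow_add (hs r), Real.rpow_natCast]
  rw [hdil1, hdil2]
  calc ∫⁻ x, F x
      = (ENNReal.ofReal (∏ r, s r ^ d r) * (C : ℝ≥0∞)) * ∫⁻ x, F x := by
        rw [mul_comm (ENNReal.ofReal _) _, hCinv, one_mul]
    _ = ENNReal.ofReal (∏ r, s r ^ d r) * ((C : ℝ≥0∞) * ∫⁻ x, F x) := by ring
    _ = ENNReal.ofReal (∏ r, s r ^ d r) *
        (ENNReal.ofReal (∏ r, s r ^ θ r) * ∫⁻ x, G x) := by rw [hmain]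
    _ = ENNReal.ofReal (∏ r, s r ^ ((d r : ℝ) + θ r)) * ∫⁻ x, G x := by
        rw [hsplit]; ring

lemma dilate_congr_ae (θ : Fin k → ℝ) (W : ∀ r : Fin k, (Fin (d r) → ℝ) → ℝ)
    (hWnn : ∀ r y, 0 ≤ W r y)
    (hWcont : ∀ r, ContinuousOn (W r) {y | y ≠ 0})
    (hWhom : ∀ (r : Fin k) (lam : ℝ), 0 < lam → ∀ y, W r (lam • y) = lam ^ θ r * W r y)
    (s : Fin k → ℝ) (hs : ∀ r, 0 < s r)
    {f g : PiX k d → ℝ}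
    (hfg : f =ᵐ[wMeasure k d fun x => ∏ r, W r (x r)] g) :
    dilate s f =ᵐ[wMeasure k d fun x => ∏ r, W r (x r)] dilate s g := by
  set μW := wMeasure k d fun x => ∏ r, W r (x r) with hμW
  obtain ⟨N, hNsub, hNmeas, hNnull⟩ := exists_measurable_superset_of_null hfg
  have hinvmeas : Measurable fun x : PiX k d => (fun r i => x r i / s r : PiX k d) := by
    apply measurable_pi_lambda
    intro r
    apply measurable_pi_lambda
    intro i
    exact ((measurable_pi_apply i).comp (measurable_pi_apply r)).div_const _
  have hnull : μW ((fun x : PiX k d => (fun r i => x r i / s r : PiX k d)) ⁻¹' N) = 0 := by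
    have h := lintegral_dilate θ W hWnn hWcont hWhom s hs
      (N.indicator (1 : PiX k d → ℝ≥0∞)) (measurable_one.indicator hNmeas)
    have hL : ∫⁻ x, N.indicator (1 : PiX k d → ℝ≥0∞) (fun r i => x r i / s r) ∂μW
        = μW ((fun x : PiX k d => (fun r i => x r i / s r : PiX k d)) ⁻¹' N) := by
      rw [← lintegral_indicator_one (hinvmeas hNmeas)]
      refine lintegral_congr fun x => ?_
      exact (Set.indicator_comp_right
        (fun x : PiX k d => (fun r i => x r i / s r : PiX k d))).symm
    have hR : ∫⁻ x, N.indicator (1 : PiX k d → ℝ≥0∞) x ∂μW = 0 := by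
      rw [lintegral_indicator_one hNmeas, hNnull]
    rw [hμW] at hL hR ⊢
    rw [← hL, h, hR, mul_zero]
  refine measure_mono_null ?_ hnull
  intro x hx
  have : f (fun r i => x r i / s r) ≠ g (fun r i => x r i / s r) := hx
  exact hNsub this

lemma eLpNorm_dilate (θ : Fin k → ℝ) (W : ∀ r : Fin k, (Fin (d r) → ℝ) → ℝ)
    (hWnn : ∀ r y, 0 ≤ W r y)
    (hWcont : ∀ r, ContinuousOn (W r) {y | y ≠ 0})
    (hWhom : ∀ (r : Fin k) (lam : ℝ), 0 < lam → ∀ y, W r (lam • y) = lam ^ θ r * W r y)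
    (s : Fin k → ℝ) (hs : ∀ r, 0 < s r)
    {f : PiX k d → ℝ}
    (hf : AEStronglyMeasurable f (wMeasure k d fun x => ∏ r, W r (x r)))
    {p : ℝ} (hp : 0 < p) :
    eLpNorm (dilate s f) (ENNReal.ofReal p) (wMeasure k d fun x => ∏ r, W r (x r)) =
      ENNReal.ofReal (∏ r, s r ^ ((d r : ℝ) + θ r)) ^ (1 / p) *
        eLpNorm f (ENNReal.ofReal p) (wMeasure k d fun x => ∏ r, W r (x r)) := by
  obtain ⟨f₀, hf₀, hff₀⟩ := hf
  have h1 : dilate s f =ᵐ[wMeasure k d fun x => ∏ r, W r (x r)] dilate s f₀ :=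
    dilate_congr_ae θ W hWnn hWcont hWhom s hs hff₀
  rw [eLpNorm_congr_ae h1, eLpNorm_congr_ae hff₀]
  have hp0 : ENNReal.ofReal p ≠ 0 := by
    simp [ENNReal.ofReal_eq_zero, not_le, hp]
  have hpt : ENNReal.ofReal p ≠ ∞ := ENNReal.ofReal_ne_top
  rw [eLpNorm_eq_lintegral_rpow_enorm_toReal hp0 hpt, eLpNorm_eq_lintegral_rpow_enorm_toReal hp0 hpt,
    ENNReal.toReal_ofReal hp.le]
  simp only [enorm_eq_nnnorm]
  have hmeas : Measurable fun x : PiX k d => ((‖f₀ x‖₊ : ℝ≥0∞)) ^ p :=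
    (hf₀.measurable.nnnorm.coe_nnreal_ennreal).pow_const _
  have h := lintegral_dilate θ W hWnn hWcont hWhom s hs
    (fun x => ((‖f₀ x‖₊ : ℝ≥0∞)) ^ p) hmeas
  have hrw : (fun x : PiX k d => ((‖dilate s f₀ x‖₊ : ℝ≥0∞)) ^ p)
      = fun x : PiX k d => ((‖f₀ (fun r i => x r i / s r)‖₊ : ℝ≥0∞)) ^ p := rfl
  rw [hrw, h, ENNReal.mul_rpow_of_nonneg _ _ (by positivity : (0:ℝ) ≤ 1 / p)]

end DilationAux

/-- **Theorem 1.1.A.** Let `ψ, ζ, ν ∈ EΨ(a,b)` with `ζ = ψ·ν`. For every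
positive vector `s`, the dilation operator `σ_s` is bounded from `G(ψ)` into `G(ζ)` and
`‖σ_s‖(G(ψ) → G(ζ)) ≤ φ(G(ν), s^{d+θ})`, where `s^{d+θ} = ∏_r s(r)^{d(r)+θ(r)}`. -/
theorem dilation_opNorm_le
    (k : ℕ) (d : Fin k → ℕ) (θ : Fin k → ℝ)
    (W : ∀ r : Fin k, (Fin (d r) → ℝ) → ℝ)
    (hWnn : ∀ r y, 0 ≤ W r y)
    (hWcont : ∀ r, ContinuousOn (W r) {y | y ≠ 0})
    (hWnontriv : ∀ r, ∃ y, W r y ≠ 0)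
    (hWhom : ∀ (r : Fin k) (lam : ℝ), 0 < lam → ∀ y, W r (lam • y) = lam ^ θ r * W r y)
    (a : ℝ) (b : ℝ≥0∞) (ha : 1 ≤ a) (hab : ENNReal.ofReal a < b)
    (ψ ζ ν : ℝ → ℝ) (hψ : IsEPsi a b ψ) (hζ : IsEPsi a b ζ) (hν : IsEPsi a b ν)
    (hmul : ∀ p ∈ expSet a b, ζ p = ψ p * ν p)
    (s : Fin k → ℝ) (hs : ∀ r, 0 < s r) :
    dilOpNorm (wMeasure k d fun x => ∏ r, W r (x r)) a b ψ ζ s ≤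
      fundE a b ν (ENNReal.ofReal (sPow s fun r => (d r : ℝ) + θ r)) := by
  classical
  refine iSup_le ?_
  intro f
  refine ENNReal.div_le_of_le_mul ?_
  refine iSup_le ?_
  intro p
  refine iSup_le ?_
  intro hp
  have hap : a < p := hp.1
  have hp1 : (1 : ℝ) ≤ p := le_trans ha hap.le
  have hppos : 0 < p := lt_of_lt_of_le zero_lt_one hp1
  have hψp : 1 ≤ ψ p := hψ.2.1 p hp
  have hνp : 1 ≤ ν p := hν.2.1 p hp
  have hψ0 : ENNReal.ofReal (ψ p) ≠ 0 := by
    simp only [ne_eq, ENNReal.ofReal_eq_zero, not_le]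
    linarith
  have hψtop : ENNReal.ofReal (ψ p) ≠ ∞ := ENNReal.ofReal_ne_top
  have hSpow : sPow s (fun r => (d r : ℝ) + θ r) = ∏ r, s r ^ ((d r : ℝ) + θ r) := rfl
  rw [eLpNorm_dilate θ W hWnn hWcont hWhom s hs f.2 hppos, hmul p hp,
    ENNReal.ofReal_mul (by linarith : (0 : ℝ) ≤ ψ p), hSpow]
  have hrearr : ∀ A B C D : ℝ≥0∞, C ≠ 0 → C ≠ ∞ → A * B / (C * D) = A / D * (B / C) := by
    intro A B C D hC0 hCt
    simp only [div_eq_mul_inv]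
    rw [ENNReal.mul_inv (Or.inl hC0) (Or.inl hCt)]
    ring
  rw [hrearr _ _ _ _ hψ0 hψtop]
  simp only [fundE, GNorm]
  refine mul_le_mul'
    (le_iSup₂ (f := fun (q : ℝ) (_ : q ∈ expSet a b) =>
      ENNReal.ofReal (∏ r, s r ^ ((d r : ℝ) + θ r)) ^ (1 / q) / ENNReal.ofReal (ν q)) p hp)
    (le_iSup₂ (f := fun (q : ℝ) (_ : q ∈ expSet a b) =>
      eLpNorm f.1 (ENNReal.ofReal q) (wMeasure k d fun x => ∏ r, W r (x r)) /
        ENNReal.ofReal (ψ q)) p hp)
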